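/- Let v be a vertex in a 3-graph G with weight x_v < 1/3 in an optimum weight vector of G, and let H be a 3-graph. If G − {v} is H-free, then λ(G) ≤ π_λ(H)·(1 − x_v)³ / (6(1 − 3x_v)). -/

import Mathlib

open Finset

/-- A (finite) hypergraph with vertex set `verts ⊆ ℕ` and edge set `edges`. -/
structure FinHypergraph where
  verts : Finset ℕ
  edges : Finset (Finset ℕ)

/-- Well-formedness: every edge is a subset of the vertex set. -/
def FinHypergraph.IsWf (G : FinHypergraph) : Prop := ∀ e ∈ G.edges, e ⊆ G.verts

/-- `G` is `r`-uniform: every edge has `r` vertices. -/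
def FinHypergraph.IsUniform (G : FinHypergraph) (r : ℕ) : Prop := ∀ e ∈ G.edges, e.card = r

/-- The Lagrangian polynomial `λ(G, x) = ∑_{e ∈ E(G)} ∏_{i ∈ e} x_i`. -/
noncomputable def lagPoly (G : FinHypergraph) (x : ℕ → ℝ) : ℝ := ∑ e ∈ G.edges, ∏ i ∈ e, x i

/-- Feasible weight vectors: the standard simplex on the vertex set of `G`. -/
def simplex (G : FinHypergraph) : Set (ℕ → ℝ) :=
  {x | (∀ i, 0 ≤ x i ∧ x i ≤ 1) ∧ ∑ i ∈ G.verts, x i = 1}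

/-- The Lagrangian `λ(G)`: the supremum of `λ(G, x)` over the simplex. -/
noncomputable def lag (G : FinHypergraph) : ℝ := sSup (lagPoly G '' simplex G)

/-- `G` contains a copy of `F` (a subgraph isomorphic to `F`). -/
def containsCopy (G F : FinHypergraph) : Prop :=
  ∃ f : ℕ → ℕ, Set.InjOn f ↑F.verts ∧ Set.MapsTo f ↑F.verts ↑G.verts ∧
    ∀ e ∈ F.edges, e.image f ∈ G.edges

/-- The induced subgraph `G − S` obtained by deleting the vertices in `S`. -/
def FinHypergraph.delete (G : FinHypergraph) (S : Finset ℕ) : FinHypergraph :=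
  ⟨G.verts \ S, G.edges.filter (fun e => Disjoint e S)⟩

/-- The Lagrangian density `π_λ(H) = sup{3!·λ(G) : G is an H-free 3-graph}`. -/
noncomputable def lagDensity (H : FinHypergraph) : ℝ :=
  sSup {c : ℝ | ∃ G : FinHypergraph, G.IsWf ∧ G.IsUniform 3 ∧ ¬ containsCopy G H ∧
    c = 6 * lag G}

lemma lagPoly_le_three (G : FinHypergraph) (hwf : G.IsWf) {x : ℕ → ℝ} (hx : x ∈ simplex G) :
    lagPoly G x ≤ 3 := by
  obtain ⟨hx01, hx1⟩ := hx
  have h1 : lagPoly G x ≤ ∑ e ∈ G.verts.powerset, ∏ i ∈ e, x i := by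
    apply Finset.sum_le_sum_of_subset_of_nonneg
    · intro e he; exact Finset.mem_powerset.mpr (hwf e he)
    · intro e _ _; exact Finset.prod_nonneg fun i _ => (hx01 i).1
  have h2 : ∑ e ∈ G.verts.powerset, ∏ i ∈ e, x i = ∏ i ∈ G.verts, (x i + 1) := by
    rw [Finset.prod_add]
    apply Finset.sum_congr rfl
    intro e _; simp
  have h3 : ∏ i ∈ G.verts, (x i + 1) ≤ ∏ i ∈ G.verts, Real.exp (x i) := by
    apply Finset.prod_le_prod
    · intro i _; linarith [(hx01 i).1]
    · intro i _; linarith [Real.add_one_le_exp (x i)]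
  have h4 : ∏ i ∈ G.verts, Real.exp (x i) = Real.exp 1 := by
    rw [← Real.exp_sum, hx1]
  have h5 : Real.exp 1 ≤ 3 := by
    have := Real.exp_one_lt_d9; linarith
  linarith

lemma bddAbove_lagSet (G : FinHypergraph) (hwf : G.IsWf) : BddAbove (lagPoly G '' simplex G) := by
  refine ⟨3, ?_⟩
  rintro r ⟨y, hy, rfl⟩
  exact lagPoly_le_three G hwf hy

lemma lagPoly_le_lag (G : FinHypergraph) (hwf : G.IsWf) {x : ℕ → ℝ} (hx : x ∈ simplex G) :
    lagPoly G x ≤ lag G :=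
  le_csSup (bddAbove_lagSet G hwf) ⟨x, hx, rfl⟩

lemma lag_le_three (G : FinHypergraph) (hwf : G.IsWf) : lag G ≤ 3 := by
  apply Real.sSup_le
  · rintro r ⟨y, hy, rfl⟩; exact lagPoly_le_three G hwf hy
  · norm_num

lemma decomp (G : FinHypergraph) (v : ℕ) (w : ℕ → ℝ) :
    lagPoly G w = lagPoly (G.delete {v}) w
      + w v * ∑ e ∈ G.edges.filter (fun e => v ∈ e), ∏ i ∈ e.erase v, w i := by
  show (∑ e ∈ G.edges, ∏ i ∈ e, w i)
      = (∑ e ∈ G.edges.filter (fun e => Disjoint e {v}), ∏ i ∈ e, w i) + _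
  rw [Finset.mul_sum]
  rw [← Finset.sum_filter_add_sum_filter_not G.edges (fun e => Disjoint e {v})]
  congr 1
  have he : G.edges.filter (fun e => ¬ Disjoint e {v}) = G.edges.filter (fun e => v ∈ e) := by
    apply Finset.filter_congr; intro e _; simp [Finset.disjoint_singleton_right]
  rw [he]
  apply Finset.sum_congr rfl
  intro e he2
  rw [← Finset.mul_prod_erase e w (Finset.mem_filter.mp he2).2]

/-- If `v` has weight `x_v < 1/3` in an optimum weight vector of a 3-graph `G`
and `G − {v}` is `H`-free, then `λ(G) ≤ π_λ(H)(1 − x_v)³/(6(1 − 3x_v))`. -/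
theorem stmt_8 (G H : FinHypergraph) (hwf : G.IsWf) (hu : G.IsUniform 3)
    (hHu : H.IsUniform 3)
    (v : ℕ) (hv : v ∈ G.verts)
    (x : ℕ → ℝ) (hx : x ∈ simplex G) (hopt : lagPoly G x = lag G)
    (hxv : x v < 1 / 3)
    (hfree : ¬ containsCopy (G.delete {v}) H) :
    lag G ≤ lagDensity H * (1 - x v) ^ 3 / (6 * (1 - 3 * x v)) := by
  obtain ⟨hx01, hxsum⟩ := hx
  set t := x v with htdef
  have ht0 : 0 ≤ t := (hx01 v).1
  have h1t : (0:ℝ) < 1 - t := by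
    have : t < 1/3 := hxv
    linarith
  have h13 : (0:ℝ) < 1 - 3*t := by
    have : t < 1/3 := hxv
    linarith
  have hne : (1:ℝ) - t ≠ 0 := ne_of_gt h1t
  have hsum_erase : ∑ i ∈ G.verts.erase v, x i = 1 - t := by
    have h := Finset.add_sum_erase G.verts x hv
    rw [hxsum] at h
    linarith
  set A := lagPoly (G.delete {v}) x with hA
  set D := ∑ e ∈ G.edges.filter (fun e => v ∈ e), ∏ i ∈ e.erase v, x i with hD
  have hdec : lagPoly G x = A + t * D := decomp G v x
  have hwfd : (G.delete {v}).IsWf := by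
    intro e he
    rcases Finset.mem_filter.mp he with ⟨he1, he2⟩
    intro i hi
    refine Finset.mem_sdiff.mpr ⟨hwf e he1 hi, ?_⟩
    simp only [Finset.mem_singleton]
    intro hiv
    exact (Finset.disjoint_singleton_right.mp he2) (hiv ▸ hi)
  have hud : (G.delete {v}).IsUniform 3 := by
    intro e he
    exact hu e (Finset.mem_filter.mp he).1
  have hπ : 6 * lag (G.delete {v}) ≤ lagDensity H := by
    apply le_csSup
    · refine ⟨18, ?_⟩
      rintro c ⟨G', hwf', _, _, rfl⟩
      have := lag_le_three G' hwf'
      linarith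
    · exact ⟨G.delete {v}, hwfd, hud, hfree, rfl⟩
  set c : ℝ → ℝ := fun s => (1 - s) / (1 - t) with hc
  set y : ℝ → ℕ → ℝ :=
    fun s i => if i = v then s else if i ∈ G.verts then x i * c s else 0 with hy
  have hxle : ∀ i ∈ G.verts.erase v, x i ≤ 1 - t := by
    intro i hi
    have hsub : ({i} : Finset ℕ) ⊆ G.verts.erase v := Finset.singleton_subset_iff.mpr hi
    have h := Finset.sum_le_sum_of_subset_of_nonneg hsub (fun j _ _ => (hx01 j).1)
    rw [Finset.sum_singleton, hsum_erase] at h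
    exact h
  have hycoord : ∀ s ∈ Set.Icc (0:ℝ) 1, ∀ i, 0 ≤ y s i ∧ y s i ≤ 1 := by
    intro s hs i
    simp only [hy]
    by_cases hiv : i = v
    · simp [hiv]; exact ⟨hs.1, hs.2⟩
    · simp only [hiv, if_false]
      by_cases hiV : i ∈ G.verts
      · simp only [hiV, if_true]
        have hxi : x i ≤ 1 - t := hxle i (Finset.mem_erase.mpr ⟨hiv, hiV⟩)
        have hxi0 : 0 ≤ x i := (hx01 i).1
        have hcs0 : 0 ≤ c s := by
          apply div_nonneg _ (le_of_lt h1t)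
          linarith [hs.2]
        constructor
        · exact mul_nonneg hxi0 hcs0
        · rw [hc]
          rw [mul_div_assoc']
          rw [div_le_one h1t]
          nlinarith [hs.1, hs.2]
      · simp [hiV]
  have hysum : ∀ s : ℝ, ∑ i ∈ G.verts.erase v, y s i = 1 - s := by
    intro s
    have h1 : ∑ i ∈ G.verts.erase v, y s i = ∑ i ∈ G.verts.erase v, x i * c s := by
      apply Finset.sum_congr rfl
      intro i hi
      rcases Finset.mem_erase.mp hi with ⟨hiv, hiV⟩
      simp [hy, hiv, hiV]
    rw [h1, ← Finset.sum_mul, hsum_erase, hc]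
    field_simp
  have hysimp : ∀ s ∈ Set.Icc (0:ℝ) 1, y s ∈ simplex G := by
    intro s hs
    refine ⟨hycoord s hs, ?_⟩
    rw [← Finset.add_sum_erase G.verts (y s) hv, hysum s]
    simp [hy]
  have hprod_del : ∀ s : ℝ, lagPoly (G.delete {v}) (y s) = (c s)^3 * A := by
    intro s
    show (∑ e ∈ G.edges.filter (fun e => Disjoint e {v}), ∏ i ∈ e, y s i) = _
    rw [hA]
    show _ = (c s)^3 * ∑ e ∈ G.edges.filter (fun e => Disjoint e {v}), ∏ i ∈ e, x i
    rw [Finset.mul_sum]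
    apply Finset.sum_congr rfl
    intro e he
    rcases Finset.mem_filter.mp he with ⟨he1, he2⟩
    have hcard : e.card = 3 := hu e he1
    have h1 : ∏ i ∈ e, y s i = ∏ i ∈ e, x i * c s := by
      apply Finset.prod_congr rfl
      intro i hi
      have hiv : i ≠ v := by
        intro hh
        exact (Finset.disjoint_singleton_right.mp he2) (hh ▸ hi)
      have hiV : i ∈ G.verts := hwf e he1 hi
      simp [hy, hiv, hiV]
    rw [h1, Finset.prod_mul_distrib, Finset.prod_const, hcard]
    ring
  have hprod_link : ∀ s : ℝ,
      (∑ e ∈ G.edges.filter (fun e => v ∈ e), ∏ i ∈ e.erase v, y s i) = (c s)^2 * D := by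
    intro s
    rw [hD, Finset.mul_sum]
    apply Finset.sum_congr rfl
    intro e he
    rcases Finset.mem_filter.mp he with ⟨he1, he2⟩
    have hcard : (e.erase v).card = 2 := by
      rw [Finset.card_erase_of_mem he2, hu e he1]
    have h1 : ∏ i ∈ e.erase v, y s i = ∏ i ∈ e.erase v, x i * c s := by
      apply Finset.prod_congr rfl
      intro i hi
      rcases Finset.mem_erase.mp hi with ⟨hiv, hie⟩
      have hiV : i ∈ G.verts := hwf e he1 hie
      simp [hy, hiv, hiV]
    rw [h1, Finset.prod_mul_distrib, Finset.prod_const, hcard]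
    ring
  have hF : ∀ s : ℝ, lagPoly G (y s) = (c s)^3 * A + s * ((c s)^2 * D) := by
    intro s
    rw [decomp G v (y s), hprod_del s, hprod_link s]
    have : y s v = s := by simp [hy]
    rw [this]
  -- the key bound A/(1-t)^3 ≤ lag (G.delete {v})
  have hy0 : y 0 ∈ simplex (G.delete {v}) := by
    refine ⟨hycoord 0 (by norm_num), ?_⟩
    show ∑ i ∈ G.verts \ {v}, y 0 i = 1
    rw [Finset.sdiff_singleton_eq_erase, hysum 0]
    norm_num
  have hAle : A / (1-t)^3 ≤ lag (G.delete {v}) := by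
    have h := lagPoly_le_lag (G.delete {v}) hwfd hy0
    rw [hprod_del 0] at h
    have hc0 : c 0 = 1 / (1-t) := by simp [hc]
    rw [hc0] at h
    calc A / (1-t)^3 = (1/(1-t))^3 * A := by rw [div_pow]; ring
    _ ≤ _ := h
  have hA2 : A ≤ lag (G.delete {v}) * (1-t)^3 := by
    rw [div_le_iff₀ (by positivity)] at hAle
    exact hAle
  by_cases ht : t = 0
  · -- easy case: lag G = A
    have h1 : lag G = A := by rw [← hopt, hdec, ht]; ring
    rw [h1, ht]
    rw [ht] at hA2
    have : lag (G.delete {v}) * (1:ℝ)^3 = lag (G.delete {v}) := by ring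
    norm_num
    nlinarith [hπ, hA2]
  · have ht0' : 0 < t := lt_of_le_of_ne ht0 (Ne.symm ht)
    set g : ℝ → ℝ :=
      fun s => (1-s)^3 * (A / (1-t)^3) + s * (1-s)^2 * (D / (1-t)^2) with hg
    have hgF : ∀ s : ℝ, lagPoly G (y s) = g s := by
      intro s
      rw [hF s, hg]
      simp only [hc]
      rw [div_pow, div_pow]
      ring
    have hgt : g t = lag G := by
      rw [← hopt, hdec, hg]
      field_simp
    have hmax : IsLocalMax g t := by
      have hmem : Set.Ioo (0:ℝ) 1 ∈ nhds t := isOpen_Ioo.mem_nhds ⟨ht0', by linarith⟩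
      filter_upwards [hmem] with s hs
      rw [← hgF s, hgt]
      exact lagPoly_le_lag G hwf (hysimp s ⟨hs.1.le, hs.2.le⟩)
    have hds : HasDerivAt (fun s : ℝ => 1 - s) (-1) t := by
      simpa using (hasDerivAt_id t).const_sub 1
    have hd1 : HasDerivAt (fun s : ℝ => (1-s)^3 * (A/(1-t)^3))
        (((3:ℕ) * (1-t)^(3-1) * (-1)) * (A/(1-t)^3)) t := (hds.pow 3).mul_const _
    have hd2 : HasDerivAt (fun s : ℝ => s * (1-s)^2 * (D/(1-t)^2))
        ((1 * (1-t)^2 + t * ((2:ℕ) * (1-t)^(2-1) * (-1))) * (D/(1-t)^2)) t :=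
      (((hasDerivAt_id t).mul (hds.pow 2)).mul_const _)
    have hg' : HasDerivAt g
        ((((3:ℕ) * (1-t)^(3-1) * (-1)) * (A/(1-t)^3))
          + ((1 * (1-t)^2 + t * ((2:ℕ) * (1-t)^(2-1) * (-1))) * (D/(1-t)^2))) t :=
      hd1.add hd2
    have h0 := hmax.deriv_eq_zero
    rw [hg'.deriv] at h0
    push_cast at h0
    have key : 3 * A = D * (1 - 3*t) := by
      field_simp at h0
      have h4 : ((1-t)^4) * (D*(1-3*t) - 3*A) = 0 := by linear_combination (1-t)^4 * h0
      rcases mul_eq_zero.mp h4 with h5 | h5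
      · exact absurd h5 (pow_ne_zero 4 hne)
      · linarith
    have hL : lag G = A + t * D := by rw [← hopt]; exact hdec
    rw [hL, le_div_iff₀ (by positivity : (0:ℝ) < 6*(1-3*t))]
    have e1 : (A + t*D) * (6*(1-3*t)) = 6*A := by linear_combination (-6*t) * key
    rw [e1]
    have e2 : 6 * lag (G.delete {v}) * (1-t)^3 ≤ lagDensity H * (1-t)^3 := by
      apply mul_le_mul_of_nonneg_right hπ (by positivity)
    nlinarith [hA2, e2]
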